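/- Let E be a real normed vector space, 0 < δ < 1 < p, and let L : E → ℝ be a functional that is positively homogeneous of degree 1−δ (i.e. L(t v) = t^{1−δ} L(v) for all t ≥ 0) and satisfies L(v) > 0 for all v ≠ 0. Suppose u ∈ E, u ≠ 0, minimizes the functional I(v) = ‖v‖^p / p − L(v)/(1−δ) over E, and suppose ‖u‖^p = L(u). Then inf { ‖v‖^p : v ∈ E, L(v) = 1 } = ‖u‖^{p(1−δ−p)/(1−δ)}, and this infimum is attained at V = L(u)^{−1/(1−δ)} · u. -/
import Mathlib


/-- Abstract Theorem 1.5(a): if `u ≠ 0` minimizes `I(v) = ‖v‖^p/p - L(v)/(1-δ)` and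
`‖u‖^p = L u`, then `inf {‖v‖^p : L v = 1} = ‖u‖^(p(1-δ-p)/(1-δ))`, attained at
`V = (L u)^(-1/(1-δ)) • u`. -/
theorem stmt3 {E : Type*} [NormedAddCommGroup E] [NormedSpace ℝ E]
    (δ p : ℝ) (hδ0 : 0 < δ) (hδ1 : δ < 1) (hp : 1 < p)
    (L : E → ℝ) (hhom : ∀ t : ℝ, 0 ≤ t → ∀ v : E, L (t • v) = t ^ (1 - δ) * L v)
    (hLpos : ∀ v : E, v ≠ 0 → 0 < L v)
    (u : E) (hu : u ≠ 0)
    (hmin : ∀ v : E, ‖u‖ ^ p / p - L u / (1 - δ) ≤ ‖v‖ ^ p / p - L v / (1 - δ))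
    (hEuler : ‖u‖ ^ p = L u) :
    IsLeast {x : ℝ | ∃ v : E, L v = 1 ∧ ‖v‖ ^ p = x}
        (‖u‖ ^ (p * (1 - δ - p) / (1 - δ))) ∧
      L ((L u ^ (-(1 : ℝ) / (1 - δ))) • u) = 1 ∧
      ‖(L u ^ (-(1 : ℝ) / (1 - δ))) • u‖ ^ p = ‖u‖ ^ (p * (1 - δ - p) / (1 - δ)) := by
  have hδ : (0:ℝ) < 1 - δ := by linarith
  have hδne : (1:ℝ) - δ ≠ 0 := ne_of_gt hδ
  have hp0 : (0:ℝ) < p := by linarith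
  have hc : 0 < L u := hLpos u hu
  have hn : 0 < ‖u‖ := norm_pos_iff.mpr hu
  set c := L u with hcdef
  set t : ℝ := c ^ (-(1:ℝ) / (1 - δ)) with htdef
  have ht : 0 < t := Real.rpow_pos_of_pos hc _
  -- L V = 1
  have hLV : L (t • u) = 1 := by
    rw [hhom t ht.le u, htdef, ← Real.rpow_mul hc.le]
    have : -(1:ℝ) / (1 - δ) * (1 - δ) = -1 := by field_simp
    rw [this, Real.rpow_neg_one]
    exact inv_mul_cancel₀ (ne_of_gt hc)
  -- ‖V‖^p = ‖u‖^(p(1-δ-p)/(1-δ))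
  have hnormV : ‖t • u‖ ^ p = ‖u‖ ^ (p * (1 - δ - p) / (1 - δ)) := by
    have hexp : p * (1 - δ - p) / (1 - δ) = p * ((1 - δ - p) / (1 - δ)) := by ring
    rw [norm_smul, Real.norm_eq_abs, abs_of_pos ht,
      Real.mul_rpow ht.le (norm_nonneg u), htdef, ← Real.rpow_mul hc.le,
      hexp, Real.rpow_mul (norm_nonneg u), hEuler,
      ← Real.rpow_add_one (ne_of_gt hc)]
    congr 1
    field_simp
    ring
  refine ⟨⟨⟨t • u, hLV, hnormV⟩, ?_⟩, hLV, hnormV⟩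
  rintro x ⟨v, hLv, rfl⟩
  have hv : v ≠ 0 := by
    rintro rfl
    have h0 := hhom 0 le_rfl 0
    rw [smul_zero, Real.zero_rpow hδne, zero_mul] at h0
    rw [h0] at hLv; norm_num at hLv
  have ha : 0 < ‖v‖ := norm_pos_iff.mpr hv
  have hpq : (0:ℝ) < p - 1 + δ := by linarith
  set q : ℝ := p / (p - 1 + δ) with hqdef
  set s : ℝ := ‖v‖ ^ (-q) with hsdef
  have hs : 0 < s := Real.rpow_pos_of_pos ha _
  set A : ℝ := ‖v‖ ^ (-q * (1 - δ)) with hAdef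
  have hA : 0 < A := Real.rpow_pos_of_pos ha _
  -- norm of scaled v
  have hns : ‖s • v‖ ^ p = A := by
    rw [norm_smul, Real.norm_eq_abs, abs_of_pos hs,
      Real.mul_rpow hs.le (norm_nonneg v), hsdef, ← Real.rpow_mul ha.le,
      ← Real.rpow_add ha, hAdef]
    congr 1
    rw [hqdef]
    field_simp
    ring
  have hLs : L (s • v) = A := by
    rw [hhom s hs.le v, hLv, mul_one, hsdef, ← Real.rpow_mul ha.le, hAdef]
  have hmins := hmin (s • v)
  rw [hns, hLs, hEuler] at hmins
  -- deduce A ≤ c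
  have hAc : A ≤ c := by
    have h1 : 0 < p * (1 - δ) := mul_pos hp0 hδ
    rw [div_sub_div _ _ (ne_of_gt hp0) hδne, div_sub_div _ _ (ne_of_gt hp0) hδne,
      div_le_div_iff₀ h1 h1] at hmins
    have h2 := le_of_mul_le_mul_right hmins h1
    nlinarith
  -- raise to the negative power (1-δ-p)/(1-δ)
  set r : ℝ := (1 - δ - p) / (1 - δ) with hrdef
  have hr : r ≤ 0 := div_nonpos_of_nonpos_of_nonneg (by linarith) hδ.le
  have key : c ^ r ≤ A ^ r := Real.rpow_le_rpow_of_nonpos hA hAc hr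
  have hAr : A ^ r = ‖v‖ ^ p := by
    rw [hAdef, ← Real.rpow_mul ha.le]
    congr 1
    rw [hqdef, hrdef]
    field_simp
    ring
  have hcr : c ^ r = ‖u‖ ^ (p * (1 - δ - p) / (1 - δ)) := by
    have hexp : p * (1 - δ - p) / (1 - δ) = p * r := by rw [hrdef]; ring
    rw [hexp, Real.rpow_mul (norm_nonneg u), hEuler]
  rw [hAr, hcr] at key
  exact key
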